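/- Let L be a partial group and Δ a set of subgroups of L such that D(L) = D(L)_Δ. Then for every P ∈ Δ: (a) N_L(P) is a subgroup of L; (b) if f ∈ L with P ⊆ S_f and P^f ∈ Δ, then N_L(P) ⊆ D(f) and c_f: N_L(P) → N_L(P^f) is an isomorphism of groups; (c) if w = (f_1,...,f_n) ∈ D(L) via P_0, P_1, ..., P_n ∈ Δ, then c_{Π(w)} = c_{f_1} ∘ c_{f_2} ∘ ⋯ ∘ c_{f_n} as an isomorphism from N_L(P_0) to N_L(P_n). -/

import Mathlib

universe u v

/-- A partial group: a set `L` with a domain `D ⊆ W(L)` of words, a (total extension of the)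
partial product `Pi`, and an involutory inversion, satisfying axioms (PG1)-(PG4).
The value of `Pi` outside `D` is irrelevant. -/
structure PartialGroup (L : Type u) : Type u where
  D : Set (List L)
  Pi : List L → L
  inv : L → L
  inv_inv : ∀ g, inv (inv g) = g
  singleton_mem : ∀ g, [g] ∈ D
  append_left_mem : ∀ {u v : List L}, u ++ v ∈ D → u ∈ D
  append_right_mem : ∀ {u v : List L}, u ++ v ∈ D → v ∈ D
  Pi_singleton : ∀ g, Pi [g] = g
  pg3_mem : ∀ u v w : List L, u ++ v ++ w ∈ D → u ++ [Pi v] ++ w ∈ D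
  pg3_eq : ∀ u v w : List L, u ++ v ++ w ∈ D → Pi (u ++ v ++ w) = Pi (u ++ [Pi v] ++ w)
  pg4_mem : ∀ w ∈ D, (List.map inv w).reverse ++ w ∈ D
  pg4_eq : ∀ w ∈ D, Pi ((List.map inv w).reverse ++ w) = Pi []

namespace PartialGroup

variable {L : Type u} {L' : Type v}

/-- Inversion of a word: `(g_1,...,g_k)⁻¹ = (g_k⁻¹,...,g_1⁻¹)`. -/
def wInv (P : PartialGroup L) (w : List L) : List L := (w.map P.inv).reverse

/-- The identity `1 = Π(∅)`. -/
def one (P : PartialGroup L) : L := P.Pi []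

/-- Conjugation `x^g = Π(g⁻¹, x, g)`. -/
def cnj (P : PartialGroup L) (g x : L) : L := P.Pi [P.inv g, x, g]

/-- `x ∈ D(g)`, i.e. `(g⁻¹, x, g) ∈ D(L)`. -/
def memD (P : PartialGroup L) (g x : L) : Prop := [P.inv g, x, g] ∈ P.D

/-- `H` is a partial subgroup of `L`. -/
def IsPartialSubgroup (P : PartialGroup L) (H : Set L) : Prop :=
  H.Nonempty ∧ (∀ g ∈ H, P.inv g ∈ H) ∧ ∀ w ∈ P.D, (∀ x ∈ w, x ∈ H) → P.Pi w ∈ H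

/-- `N` is a partial normal subgroup of `L`. -/
def IsPartialNormal (P : PartialGroup L) (N : Set L) : Prop :=
  P.IsPartialSubgroup N ∧ ∀ g : L, ∀ n ∈ N, P.memD g n → P.cnj g n ∈ N

/-- `H` is a subgroup of `L`: a partial subgroup with `W(H) ⊆ D(L)`. -/
def IsSubgroup (P : PartialGroup L) (H : Set L) : Prop :=
  P.IsPartialSubgroup H ∧ ∀ w : List L, (∀ x ∈ w, x ∈ H) → w ∈ P.D

/-- Homomorphism of partial groups. -/
def IsHom (P : PartialGroup L) (P' : PartialGroup L') (φ : L → L') : Prop :=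
  ∀ w ∈ P.D, w.map φ ∈ P'.D ∧ φ (P.Pi w) = P'.Pi (w.map φ)

/-- Isomorphism of partial groups: a bijective homomorphism with `D(L)^φ = D(L')`. -/
def IsIso (P : PartialGroup L) (P' : PartialGroup L') (φ : L → L') : Prop :=
  Function.Bijective φ ∧ P.IsHom P' φ ∧ List.map φ '' P.D = P'.D

end PartialGroup

open PartialGroup

namespace PartialGroup
variable {L : Type u} (P : PartialGroup L)

variable (P : PartialGroup L)

lemma nil_mem : ([] : List L) ∈ P.D :=
  P.append_right_mem (u := [P.one]) (v := []) (by simpa using P.singleton_mem P.one)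

lemma wInv_append (u v : List L) : P.wInv (u ++ v) = P.wInv v ++ P.wInv u := by
  simp [wInv]

lemma wInv_singleton (g : L) : P.wInv [g] = [P.inv g] := by simp [wInv]

lemma wInv_nil : P.wInv ([] : List L) = [] := by simp [wInv]

lemma wInv_cons (g : L) (w : List L) : P.wInv (g :: w) = P.wInv w ++ [P.inv g] := by
  simp [wInv]

lemma wInv_wInv (w : List L) : P.wInv (P.wInv w) = w := by
  simp [wInv, List.map_reverse, List.map_map, Function.comp_def, P.inv_inv]

lemma insert_one_mem {u w : List L} (h : u ++ w ∈ P.D) : u ++ P.one :: w ∈ P.D := by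
  have := P.pg3_mem u [] w (by simpa using h)
  simpa [one] using this

lemma insert_one_eq {u w : List L} (h : u ++ w ∈ P.D) :
    P.Pi (u ++ P.one :: w) = P.Pi (u ++ w) := by
  have := P.pg3_eq u [] w (by simpa using h)
  simp only [List.append_nil, one] at this ⊢
  rw [show u ++ P.Pi [] :: w = u ++ [P.Pi []] ++ w by simp]
  exact (by simpa using this.symm)

lemma pg4_mem' {w : List L} (h : w ∈ P.D) : P.wInv w ++ w ∈ P.D := P.pg4_mem w h

lemma pg4_eq' {w : List L} (h : w ∈ P.D) : P.Pi (P.wInv w ++ w) = P.one := P.pg4_eq w h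

lemma wInv_mem {w : List L} (h : w ∈ P.D) : P.wInv w ∈ P.D :=
  P.append_left_mem (P.pg4_mem' h)

lemma mem_right_inv {w : List L} (h : w ∈ P.D) : w ++ P.wInv w ∈ P.D := by
  have := P.pg4_mem' (P.wInv_mem h)
  rwa [wInv_wInv] at this

lemma Pi_right_inv {w : List L} (h : w ∈ P.D) : P.Pi (w ++ P.wInv w) = P.one := by
  have := P.pg4_eq' (P.wInv_mem h)
  rwa [wInv_wInv] at this

lemma split_mem {u v : List L} (h : u ++ v ∈ P.D) : [P.Pi u, P.Pi v] ∈ P.D := by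
  have h1 : [P.Pi u] ++ v ∈ P.D := by simpa using P.pg3_mem [] u v (by simpa using h)
  have h2 := P.pg3_mem [P.Pi u] v [] (by simpa using h1)
  simpa using h2

lemma split_eq {u v : List L} (h : u ++ v ∈ P.D) : P.Pi (u ++ v) = P.Pi [P.Pi u, P.Pi v] := by
  have h1 : [P.Pi u] ++ v ∈ P.D := by simpa using P.pg3_mem [] u v (by simpa using h)
  have e1 := P.pg3_eq [] u v (by simpa using h)
  have e2 := P.pg3_eq [P.Pi u] v [] (by simpa using h1)
  simp only [List.nil_append, List.append_nil] at e1 e2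
  rw [e1]
  simpa using e2

lemma left_ext_mem {u v : List L} (h : u ++ v ∈ P.D) : P.wInv u ++ u ++ v ∈ P.D := by
  have h1 := P.pg4_mem' h
  rw [wInv_append] at h1
  have : P.wInv v ++ (P.wInv u ++ u ++ v) ∈ P.D := by simpa [List.append_assoc] using h1
  exact P.append_right_mem this

lemma left_ext_eq {u v : List L} (h : u ++ v ∈ P.D) :
    P.Pi (P.wInv u ++ u ++ v) = P.Pi v := by
  have hm := P.left_ext_mem h
  have hu : u ∈ P.D := P.append_left_mem h
  have hv : v ∈ P.D := P.append_right_mem h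
  have e1 := P.pg3_eq [] (P.wInv u ++ u) v (by simpa [List.append_assoc] using hm)
  simp only [List.nil_append] at e1
  rw [show P.wInv u ++ u ++ v = P.wInv u ++ u ++ v from rfl, e1, P.pg4_eq' hu]
  have := P.insert_one_eq (u := []) (w := v) (by simpa using hv)
  simpa [one] using this

lemma right_ext_mem {u v : List L} (h : u ++ v ∈ P.D) : u ++ v ++ P.wInv v ∈ P.D := by
  have h2 := P.mem_right_inv h
  rw [wInv_append] at h2
  have h5 : (u ++ v ++ P.wInv v) ++ P.wInv u ∈ P.D := by
    simpa [List.append_assoc] using h2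
  exact P.append_left_mem h5

lemma right_ext_eq {u v : List L} (h : u ++ v ∈ P.D) :
    P.Pi (u ++ v ++ P.wInv v) = P.Pi u := by
  have hm := P.right_ext_mem h
  have hu : u ∈ P.D := P.append_left_mem h
  have hv : v ∈ P.D := P.append_right_mem h
  have e1 := P.pg3_eq u (v ++ P.wInv v) [] (by simpa [List.append_assoc] using hm)
  simp only [List.append_nil] at e1
  rw [List.append_assoc, e1, P.Pi_right_inv hv]
  have := P.insert_one_eq (u := u) (w := []) (by simpa using hu)
  simpa [one] using this

lemma Pi_wInv {w : List L} (h : w ∈ P.D) : P.Pi (P.wInv w) = P.inv (P.Pi w) := by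
  set a := P.Pi w
  have hz : P.wInv w ++ w ∈ P.D := P.pg4_mem' h
  have hz1 : P.wInv w ++ [a] ∈ P.D := by
    simpa using P.pg3_mem (P.wInv w) w [] (by simpa using hz)
  have ez1 : P.Pi (P.wInv w ++ [a]) = P.one := by
    have := P.pg3_eq (P.wInv w) w [] (by simpa using hz)
    simp only [List.append_nil] at this
    rw [← this]
    exact P.pg4_eq' h
  have hre := P.right_ext_mem hz1
  have ere := P.right_ext_eq hz1
  rw [wInv_singleton] at hre ere
  -- Pi (wInv w ++ [a] ++ [inv a]) = Pi (wInv w)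
  have e2 := P.pg3_eq [] (P.wInv w ++ [a]) [P.inv a] (by simpa [List.append_assoc] using hre)
  simp only [List.nil_append] at e2
  have : P.Pi (P.wInv w ++ [a] ++ [P.inv a]) = P.Pi ([P.Pi (P.wInv w ++ [a])] ++ [P.inv a]) := e2
  rw [ez1] at this
  have e3 : P.Pi ([P.one] ++ [P.inv a]) = P.Pi [P.inv a] := by
    have := P.insert_one_eq (u := []) (w := [P.inv a]) (by simpa using P.singleton_mem (P.inv a))
    simpa using this
  rw [e3, P.Pi_singleton] at this
  rw [← ere, this]

lemma inv_one : P.inv P.one = P.one := by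
  have := P.Pi_wInv (w := []) P.nil_mem
  rw [wInv_nil] at this
  simp only [one] at this ⊢
  exact this.symm


lemma memD_one (x : L) : P.memD P.one x := by
  unfold memD
  rw [P.inv_one]
  have h1 : ([] : List L) ++ P.one :: [x] ∈ P.D :=
    P.insert_one_mem (u := []) (w := [x]) (by simpa using P.singleton_mem x)
  have h2 : [P.one, x] ++ P.one :: [] ∈ P.D :=
    P.insert_one_mem (u := [P.one, x]) (w := []) (by simpa using h1)
  simpa using h2

lemma cnj_one (x : L) : P.cnj P.one x = x := by
  unfold cnj
  rw [P.inv_one]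
  have h1 : ([] : List L) ++ [x] ∈ P.D := by simpa using P.singleton_mem x
  have h1' : ([] : List L) ++ P.one :: [x] ∈ P.D := P.insert_one_mem h1
  have e2 := P.insert_one_eq (u := [P.one, x]) (w := []) (by simpa using h1')
  have e1 := P.insert_one_eq (u := []) (w := [x]) h1
  simp only [List.nil_append, List.append_nil] at e1 e2
  calc P.Pi [P.one, x, P.one] = P.Pi [P.one, x] := by simpa using e2
    _ = P.Pi [x] := e1
    _ = x := P.Pi_singleton x

lemma cnj_one_image (Q : Set L) : P.cnj P.one '' Q = Q := by
  ext y; constructor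
  · rintro ⟨x, hx, rfl⟩; rwa [P.cnj_one]
  · intro hy; exact ⟨y, hy, P.cnj_one y⟩

/-- Lemma A: `x^f` is in `D(f⁻¹)` and conjugating back recovers `x`. -/
lemma cnj_invert {f x : L} (h : P.memD f x) :
    P.memD (P.inv f) (P.cnj f x) ∧ P.cnj (P.inv f) (P.cnj f x) = x := by
  have h' : [P.inv f] ++ [x, f] ∈ P.D := by simpa [PartialGroup.memD] using h
  have h2m := P.left_ext_mem h'
  have h2e := P.left_ext_eq h'
  rw [P.wInv_singleton, P.inv_inv] at h2m h2e
  -- h2m : [f] ++ [inv f] ++ [x, f] ∈ D ; normalize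
  have h2m' : [f, P.inv f, x] ++ [f] ∈ P.D := by simpa using h2m
  have h3m := P.right_ext_mem h2m'
  have h3e := P.right_ext_eq h2m'
  rw [P.wInv_singleton] at h3m h3e
  -- h3m : [f, f⁻¹, x, f, f⁻¹] ∈ D
  have h3m' : [f] ++ [P.inv f, x, f] ++ [P.inv f] ∈ P.D := by simpa using h3m
  have hmem := P.pg3_mem [f] [P.inv f, x, f] [P.inv f] h3m'
  have heq := P.pg3_eq [f] [P.inv f, x, f] [P.inv f] h3m'
  -- hmem : [f] ++ [cnj f x] ++ [f⁻¹] ∈ D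
  have hme : P.memD (P.inv f) (P.cnj f x) := by
    unfold memD; rw [P.inv_inv]; simpa [cnj] using hmem
  refine ⟨hme, ?_⟩
  have hffx : [f, P.inv f, x] ∈ P.D := P.append_left_mem h2m'
  have cff : P.Pi [f, P.inv f] = P.one := by
    have := P.Pi_right_inv (w := [f]) (P.singleton_mem f)
    simpa [P.wInv_singleton] using this
  have c1 := P.pg3_eq [] [f, P.inv f] [x] (by simpa using hffx)
  simp only [List.nil_append] at c1
  have cx : P.Pi [f, P.inv f, x] = x := by
    have e1 := P.insert_one_eq (u := []) (w := [x]) (by simpa using P.singleton_mem x)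
    simp only [List.nil_append] at e1
    calc P.Pi [f, P.inv f, x] = P.Pi ([P.Pi [f, P.inv f]] ++ [x]) := by simpa using c1
      _ = P.Pi (P.one :: [x]) := by rw [cff]; rfl
      _ = P.Pi [x] := e1
      _ = x := P.Pi_singleton x
  unfold cnj
  rw [P.inv_inv]
  calc P.Pi [f, P.Pi [P.inv f, x, f], P.inv f]
      = P.Pi ([f] ++ [P.inv f, x, f] ++ [P.inv f]) := by
        rw [show [f, P.Pi [P.inv f, x, f], P.inv f] =
          [f] ++ [P.Pi [P.inv f, x, f]] ++ [P.inv f] by simp, ← heq]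
    _ = P.Pi [f, P.inv f, x] := by simpa using h3e
    _ = x := cx

/-- inverse of a conjugate. -/
lemma inv_cnj {f g : L} (h : P.memD f g) : P.inv (P.cnj f g) = P.cnj f (P.inv g) := by
  have := P.Pi_wInv (w := [P.inv f, g, f]) h
  rw [show P.wInv [P.inv f, g, f] = [P.inv f, P.inv g, f] by simp [wInv, P.inv_inv]] at this
  simpa [cnj] using this.symm

end PartialGroup

/-- `H` is a `p`-subgroup: a subgroup whose cardinality is a power of `p`. -/
def IsPSub {L : Type u} (p : ℕ) (P : PartialGroup L) (H : Set L) : Prop :=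
  P.IsSubgroup H ∧ ∃ k : ℕ, Nat.card H = p ^ k

/-- `H` is a maximal `p`-subgroup among subsets of `A`. -/
def IsMaxPSubIn {L : Type u} (p : ℕ) (P : PartialGroup L) (A H : Set L) : Prop :=
  H ⊆ A ∧ IsPSub p P H ∧ ∀ K : Set L, K ⊆ A → IsPSub p P K → H ⊆ K → K = H

/-- The normalizer `N_L(Q) = {g : Q ⊆ D(g), Q^g = Q}`. -/
def NL {L : Type u} (P : PartialGroup L) (Q : Set L) : Set L :=
  {g | (∀ x ∈ Q, P.memD g x) ∧ P.cnj g '' Q = Q}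

/-- `Dvia P Δ w Q` means `w ∈ D(L)_Δ` via a chain `Q = P₀, P₁, ..., Pₖ` with
`P_{i-1} ⊆ D(gᵢ)`, `P_{i-1}^{gᵢ} = Pᵢ`, and all `Pᵢ ∈ Δ`. -/
def Dvia {L : Type u} (P : PartialGroup L) (Δ : Set (Set L)) : List L → Set L → Prop
  | [], Q => Q ∈ Δ
  | g :: gs, Q => Q ∈ Δ ∧ (∀ x ∈ Q, P.memD g x) ∧ Dvia P Δ gs (P.cnj g '' Q)

/-- `(L, Δ, S)` is a locality: `S` is a maximal `p`-subgroup of `L`, `Δ` is a nonempty set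
of subgroups of `S` with `D(L) = D(L)_Δ`, closed under `L`-conjugation and overgroups in `S`. -/
def IsLocality {L : Type u} (p : ℕ) (P : PartialGroup L) (Δ : Set (Set L)) (S : Set L) : Prop :=
  IsMaxPSubIn p P Set.univ S ∧ Δ.Nonempty ∧ (∀ Q ∈ Δ, P.IsSubgroup Q ∧ Q ⊆ S) ∧
  P.D = {w | ∃ Q, Dvia P Δ w Q} ∧
  (∀ Q ∈ Δ, ∀ g : L, (∀ x ∈ Q, P.memD g x) → P.cnj g '' Q ∈ Δ) ∧
  ∀ Q ∈ Δ, ∀ R : Set L, Q ⊆ R → R ⊆ S → P.IsSubgroup R → R ∈ Δ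

section Delta
variable {L : Type u} (P : PartialGroup L) (Δ : Set (Set L))

/-- The end of the conjugation chain. -/
def chEnd (w : List L) (Q : Set L) : Set L := w.foldl (fun R g => P.cnj g '' R) Q

lemma chEnd_nil (Q : Set L) : chEnd P [] Q = Q := rfl
lemma chEnd_cons (g : L) (gs : List L) (Q : Set L) :
    chEnd P (g :: gs) Q = chEnd P gs (P.cnj g '' Q) := rfl
lemma chEnd_singleton (g : L) (Q : Set L) : chEnd P [g] Q = P.cnj g '' Q := rfl
lemma chEnd_append (u v : List L) (Q : Set L) :
    chEnd P (u ++ v) Q = chEnd P v (chEnd P u Q) := List.foldl_append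

lemma Dvia_mem {w : List L} {Q : Set L} (h : Dvia P Δ w Q) : Q ∈ Δ := by
  cases w with
  | nil => exact h
  | cons g gs => exact h.1

lemma Dvia_cons' {g : L} {gs : List L} {Q R : Set L} (hQ : Q ∈ Δ)
    (h1 : ∀ x ∈ Q, P.memD g x) (h2 : P.cnj g '' Q = R) (h3 : Dvia P Δ gs R) :
    Dvia P Δ (g :: gs) Q := ⟨hQ, h1, by rw [h2]; exact h3⟩

lemma Dvia_append {u v : List L} {Q : Set L} (hu : Dvia P Δ u Q)
    (hv : Dvia P Δ v (chEnd P u Q)) : Dvia P Δ (u ++ v) Q := by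
  induction u generalizing Q with
  | nil => exact hv
  | cons g gs ih => exact ⟨hu.1, hu.2.1, ih hu.2.2 hv⟩

lemma Dvia_D (hD : P.D = {w | ∃ Q, Dvia P Δ w Q}) {w : List L} {Q : Set L}
    (h : Dvia P Δ w Q) : w ∈ P.D := by rw [hD]; exact ⟨Q, h⟩

lemma inv_step {f : L} {Q : Set L} (h : ∀ x ∈ Q, P.memD f x) :
    (∀ y ∈ P.cnj f '' Q, P.memD (P.inv f) y) ∧ P.cnj (P.inv f) '' (P.cnj f '' Q) = Q := by
  constructor
  · rintro y ⟨x, hx, rfl⟩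
    exact (P.cnj_invert (h x hx)).1
  · ext y; constructor
    · rintro ⟨z, ⟨x, hx, rfl⟩, rfl⟩
      rw [(P.cnj_invert (h x hx)).2]; exact hx
    · intro hy
      exact ⟨P.cnj f y, ⟨y, hy, rfl⟩, (P.cnj_invert (h y hy)).2⟩

lemma subgroup_sub_NL {Q : Set L} (hQ : P.IsSubgroup Q) : Q ⊆ NL P Q := by
  intro q hq
  obtain ⟨⟨hne, hinv, hclose⟩, hword⟩ := hQ
  have hlist : ∀ a ∈ Q, ∀ b ∈ Q, ∀ z ∈ [P.inv a, b, a], z ∈ Q := by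
    intro a ha b hb z hz
    simp only [List.mem_cons, List.not_mem_nil, or_false] at hz
    rcases hz with rfl | rfl | rfl
    · exact hinv a ha
    · exact hb
    · exact ha
  have hmemD : ∀ x ∈ Q, P.memD q x := fun x hx => hword _ (hlist q hq x hx)
  refine ⟨hmemD, ?_⟩
  ext y; constructor
  · rintro ⟨x, hx, rfl⟩
    exact hclose _ (hword _ (hlist q hq x hx)) (hlist q hq x hx)
  · intro hy
    have hq' : P.inv q ∈ Q := hinv q hq
    have hmd : P.memD (P.inv q) y := by
      unfold PartialGroup.memD
      exact hword _ (by
        intro z hz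
        simp only [List.mem_cons, List.not_mem_nil, or_false] at hz
        rcases hz with rfl | rfl | rfl
        · rw [P.inv_inv]; exact hq
        · exact hy
        · exact hq')
    have hxQ : P.cnj (P.inv q) y ∈ Q := by
      unfold PartialGroup.cnj
      refine hclose _ hmd ?_
      intro z hz
      simp only [List.mem_cons, List.not_mem_nil, or_false] at hz
      rcases hz with rfl | rfl | rfl
      · rw [P.inv_inv]; exact hq
      · exact hy
      · exact hq'
    refine ⟨P.cnj (P.inv q) y, hxQ, ?_⟩
    have := (P.cnj_invert hmd).2
    rwa [P.inv_inv] at this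

lemma inv_mem_NL {g : L} {Q : Set L} (h : g ∈ NL P Q) : P.inv g ∈ NL P Q := by
  obtain ⟨h1, h2⟩ := h
  have hs := inv_step P h1
  rw [h2] at hs
  exact hs

lemma one_mem_NL (Q : Set L) : P.one ∈ NL P Q :=
  ⟨fun x _ => P.memD_one x, P.cnj_one_image Q⟩

lemma Dvia_const {w : List L} {Q : Set L} (hQ : Q ∈ Δ) (h : ∀ g ∈ w, g ∈ NL P Q) :
    Dvia P Δ w Q := by
  induction w with
  | nil => exact hQ
  | cons g gs ih =>
    exact Dvia_cons' P Δ hQ (h g (by simp)).1 (h g (by simp)).2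
      (ih (fun g' hg' => h g' (by simp [hg'])))

lemma Dvia_rev {w : List L} {Q : Set L} (h : Dvia P Δ w Q) :
    Dvia P Δ (P.wInv w) (chEnd P w Q) ∧ chEnd P (P.wInv w) (chEnd P w Q) = Q := by
  induction w generalizing Q with
  | nil => exact ⟨h, rfl⟩
  | cons g gs ih =>
    obtain ⟨hQ, hg, hgs⟩ := h
    obtain ⟨ih1, ih2⟩ := ih hgs
    have hQ1 : P.cnj g '' Q ∈ Δ := Dvia_mem P Δ hgs
    have hstep := inv_step P hg
    rw [P.wInv_cons, chEnd_cons]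
    constructor
    · refine Dvia_append P Δ ih1 ?_
      rw [ih2]
      exact Dvia_cons' P Δ hQ1 hstep.1 hstep.2 hQ
    · rw [chEnd_append, ih2, chEnd_singleton, hstep.2]

end Delta
section Delta2
variable {L : Type u} (P : PartialGroup L) (Δ : Set (Set L))

/-- Pointwise: `(x^g)^f = (x^f)^(g^f)`, with the conjugating word defined. -/
lemma cnj_cnj (hΔ : ∀ Q ∈ Δ, P.IsSubgroup Q) (hD : P.D = {w | ∃ Q, Dvia P Δ w Q})
    {f g x : L} {Q : Set L} (hQ : Q ∈ Δ) (hQ' : P.cnj f '' Q ∈ Δ)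
    (hf : ∀ x ∈ Q, P.memD f x) (hg : g ∈ NL P Q) (hfg : P.memD f g) (hx : x ∈ Q) :
    [P.cnj f (P.inv g), P.cnj f x, P.cnj f g] ∈ P.D ∧
    P.cnj (P.cnj f g) (P.cnj f x) = P.cnj f (P.cnj g x) := by
  have hxN : x ∈ NL P Q := subgroup_sub_NL P (hΔ Q hQ) hx
  have hstep := inv_step P hf
  have hgi := inv_mem_NL P hg
  -- the long word
  have hv : Dvia P Δ [P.inv f, P.inv g, f, P.inv f, x, f, P.inv f, g, f] (P.cnj f '' Q) := by
    refine Dvia_cons' P Δ hQ' hstep.1 hstep.2 ?_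
    refine Dvia_cons' P Δ hQ hgi.1 hgi.2 ?_
    refine Dvia_cons' P Δ hQ hf rfl ?_
    refine Dvia_cons' P Δ hQ' hstep.1 hstep.2 ?_
    refine Dvia_cons' P Δ hQ hxN.1 hxN.2 ?_
    refine Dvia_cons' P Δ hQ hf rfl ?_
    refine Dvia_cons' P Δ hQ' hstep.1 hstep.2 ?_
    refine Dvia_cons' P Δ hQ hg.1 hg.2 ?_
    exact Dvia_cons' P Δ hQ hf rfl hQ'
  have hvD : [P.inv f, P.inv g, f, P.inv f, x, f, P.inv f, g, f] ∈ P.D :=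
    Dvia_D P Δ hD hv
  -- way 1 : contract the three triples
  have c1m := P.pg3_mem [] [P.inv f, P.inv g, f] [P.inv f, x, f, P.inv f, g, f]
    (by simpa using hvD)
  have c1e := P.pg3_eq [] [P.inv f, P.inv g, f] [P.inv f, x, f, P.inv f, g, f]
    (by simpa using hvD)
  have c2m := P.pg3_mem [P.Pi [P.inv f, P.inv g, f]] [P.inv f, x, f] [P.inv f, g, f]
    (by simpa using c1m)
  have c2e := P.pg3_eq [P.Pi [P.inv f, P.inv g, f]] [P.inv f, x, f] [P.inv f, g, f]
    (by simpa using c1m)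
  have c3m := P.pg3_mem [P.Pi [P.inv f, P.inv g, f], P.Pi [P.inv f, x, f]] [P.inv f, g, f] []
    (by simpa using c2m)
  have c3e := P.pg3_eq [P.Pi [P.inv f, P.inv g, f], P.Pi [P.inv f, x, f]] [P.inv f, g, f] []
    (by simpa using c2m)
  have hw3 : [P.cnj f (P.inv g), P.cnj f x, P.cnj f g] ∈ P.D := by
    simpa [PartialGroup.cnj] using c3m
  refine ⟨hw3, ?_⟩
  have way1 : P.Pi [P.inv f, P.inv g, f, P.inv f, x, f, P.inv f, g, f] =
      P.Pi [P.cnj f (P.inv g), P.cnj f x, P.cnj f g] := by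
    simp only [PartialGroup.cnj]
    calc P.Pi [P.inv f, P.inv g, f, P.inv f, x, f, P.inv f, g, f]
        = P.Pi ([P.Pi [P.inv f, P.inv g, f]] ++ [P.inv f, x, f, P.inv f, g, f]) := by
          simpa using c1e
      _ = P.Pi ([P.Pi [P.inv f, P.inv g, f], P.Pi [P.inv f, x, f]] ++ [P.inv f, g, f]) := by
          simpa using c2e
      _ = P.Pi [P.Pi [P.inv f, P.inv g, f], P.Pi [P.inv f, x, f], P.Pi [P.inv f, g, f]] := by
          simpa using c3e
  -- way 2 : contract the middle
  have hmidD : [P.inv g, f, P.inv f, x, f, P.inv f, g] ∈ P.D := by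
    have h1 : ([P.inv f] ++ [P.inv g, f, P.inv f, x, f, P.inv f, g]) ++ [f] ∈ P.D := by
      simpa using hvD
    exact P.append_right_mem (P.append_left_mem h1)
  have d1e := P.pg3_eq [P.inv f] [P.inv g, f, P.inv f, x, f, P.inv f, g] [f]
    (by simpa using hvD)
  -- auxiliary D-words
  have hmid2 : Dvia P Δ [P.inv g, x, f, P.inv f, g] Q := by
    refine Dvia_cons' P Δ hQ hgi.1 hgi.2 ?_
    refine Dvia_cons' P Δ hQ hxN.1 hxN.2 ?_
    refine Dvia_cons' P Δ hQ hf rfl ?_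
    refine Dvia_cons' P Δ hQ' hstep.1 hstep.2 ?_
    exact Dvia_cons' P Δ hQ hg.1 hg.2 hQ
  have hmid2D : [P.inv g, x, f, P.inv f, g] ∈ P.D := Dvia_D P Δ hD hmid2
  have hmid3D : [P.inv g, x, g] ∈ P.D := hg.1 x hx
  have hff : P.Pi [f, P.inv f] = P.one := by
    have := P.Pi_right_inv (P.singleton_mem f)
    simpa [P.wInv_singleton] using this
  -- compute Pi mid
  have e1 := P.pg3_eq [P.inv g] [f, P.inv f] [x, f, P.inv f, g] (by simpa using hmidD)
  have e2 : P.Pi ([P.inv g] ++ P.one :: [x, f, P.inv f, g]) =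
      P.Pi ([P.inv g] ++ [x, f, P.inv f, g]) :=
    P.insert_one_eq (by simpa using hmid2D)
  have e3 := P.pg3_eq [P.inv g, x] [f, P.inv f] [g] (by simpa using hmid2D)
  have e4 : P.Pi ([P.inv g, x] ++ P.one :: [g]) = P.Pi ([P.inv g, x] ++ [g]) :=
    P.insert_one_eq (by simpa using hmid3D)
  have emid : P.Pi [P.inv g, f, P.inv f, x, f, P.inv f, g] = P.Pi [P.inv g, x, g] := by
    calc P.Pi [P.inv g, f, P.inv f, x, f, P.inv f, g]
        = P.Pi ([P.inv g] ++ [P.Pi [f, P.inv f]] ++ [x, f, P.inv f, g]) := by simpa using e1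
      _ = P.Pi ([P.inv g] ++ P.one :: [x, f, P.inv f, g]) := by rw [hff]; simp
      _ = P.Pi [P.inv g, x, f, P.inv f, g] := by simpa using e2
      _ = P.Pi ([P.inv g, x] ++ [P.Pi [f, P.inv f]] ++ [g]) := by simpa using e3
      _ = P.Pi ([P.inv g, x] ++ P.one :: [g]) := by rw [hff]; simp
      _ = P.Pi [P.inv g, x, g] := by simpa using e4
  have way2 : P.Pi [P.inv f, P.inv g, f, P.inv f, x, f, P.inv f, g, f] =
      P.cnj f (P.cnj g x) := by
    simp only [PartialGroup.cnj]
    calc P.Pi [P.inv f, P.inv g, f, P.inv f, x, f, P.inv f, g, f]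
        = P.Pi ([P.inv f] ++ [P.Pi [P.inv g, f, P.inv f, x, f, P.inv f, g]] ++ [f]) := by
          simpa using d1e
      _ = P.Pi [P.inv f, P.Pi [P.inv g, x, g], f] := by rw [emid]; simp
  -- conclude
  have : P.Pi [P.inv (P.cnj f g), P.cnj f x, P.cnj f g] =
      P.Pi [P.cnj f (P.inv g), P.cnj f x, P.cnj f g] := by
    rw [P.inv_cnj hfg]
  rw [PartialGroup.cnj, this, ← way1, way2]

/-- Lemma D: conjugation maps normalizers to normalizers. -/
lemma cnj_mem_NL (hΔ : ∀ Q ∈ Δ, P.IsSubgroup Q) (hD : P.D = {w | ∃ Q, Dvia P Δ w Q})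
    {f g : L} {Q : Set L} (hQ : Q ∈ Δ) (hQ' : P.cnj f '' Q ∈ Δ)
    (hf : ∀ x ∈ Q, P.memD f x) (hg : g ∈ NL P Q) (hfg : P.memD f g) :
    P.cnj f g ∈ NL P (P.cnj f '' Q) := by
  constructor
  · rintro y ⟨x, hx, rfl⟩
    unfold PartialGroup.memD
    rw [P.inv_cnj hfg]
    exact (cnj_cnj P Δ hΔ hD hQ hQ' hf hg hfg hx).1
  · ext y; constructor
    · rintro ⟨z, ⟨x, hx, rfl⟩, rfl⟩
      rw [(cnj_cnj P Δ hΔ hD hQ hQ' hf hg hfg hx).2]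
      have hgx : P.cnj g x ∈ Q := by rw [← hg.2]; exact ⟨x, hx, rfl⟩
      exact ⟨P.cnj g x, hgx, rfl⟩
    · rintro ⟨x, hx, rfl⟩
      obtain ⟨x', hx', hxx⟩ : x ∈ P.cnj g '' Q := by rw [hg.2]; exact hx
      refine ⟨P.cnj f x', ⟨x', hx', rfl⟩, ?_⟩
      rw [(cnj_cnj P Δ hΔ hD hQ hQ' hf hg hfg hx').2, hxx]

end Delta2
section Delta3
variable {L : Type u} (P : PartialGroup L) (Δ : Set (Set L))

lemma sandwich (hΔ : ∀ Q ∈ Δ, P.IsSubgroup Q) (hD : P.D = {w | ∃ Q, Dvia P Δ w Q}) :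
    ∀ (w : List L) (Q : Set L), Dvia P Δ w Q → ∀ g ∈ NL P Q,
    (P.wInv w ++ g :: w ∈ P.D) ∧
    P.Pi (P.wInv w ++ g :: w) = w.foldl (fun y f => P.cnj f y) g := by
  intro w
  induction w with
  | nil =>
    intro Q h g hg
    constructor
    · simpa [PartialGroup.wInv] using P.singleton_mem g
    · simp [PartialGroup.wInv, P.Pi_singleton]
  | cons f gs ih =>
    intro Q h g hg
    have h' := h
    obtain ⟨hQ, hf, hgs⟩ := h
    have hQ' : P.cnj f '' Q ∈ Δ := Dvia_mem P Δ hgs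
    have hrev := Dvia_rev P Δ h'
    have hz : Dvia P Δ (P.wInv (f :: gs) ++ g :: (f :: gs)) (chEnd P (f :: gs) Q) := by
      refine Dvia_append P Δ hrev.1 ?_
      rw [hrev.2]
      exact Dvia_cons' P Δ hQ hg.1 hg.2 h'
    have hzD := Dvia_D P Δ hD hz
    have hzD' : P.wInv gs ++ [P.inv f, g, f] ++ gs ∈ P.D := by
      have : P.wInv (f :: gs) ++ g :: (f :: gs) =
          P.wInv gs ++ [P.inv f, g, f] ++ gs := by
        rw [P.wInv_cons]; simp
      rwa [this] at hzD
    have cm := P.pg3_mem (P.wInv gs) [P.inv f, g, f] gs hzD'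
    have ce := P.pg3_eq (P.wInv gs) [P.inv f, g, f] gs hzD'
    have hfg : P.memD f g := by
      have h1 : P.wInv gs ++ ([P.inv f, g, f] ++ gs) ∈ P.D := by
        simpa [List.append_assoc] using hzD'
      exact P.append_left_mem (P.append_right_mem h1)
    have hcg : P.cnj f g ∈ NL P (P.cnj f '' Q) :=
      cnj_mem_NL P Δ hΔ hD hQ hQ' hf hg hfg
    have ihres := ih (P.cnj f '' Q) hgs (P.cnj f g) hcg
    constructor
    · have : P.wInv (f :: gs) ++ g :: (f :: gs) =
          P.wInv gs ++ [P.inv f, g, f] ++ gs := by rw [P.wInv_cons]; simp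
      rw [this]; exact hzD'
    · calc P.Pi (P.wInv (f :: gs) ++ g :: (f :: gs))
          = P.Pi (P.wInv gs ++ [P.inv f, g, f] ++ gs) := by rw [P.wInv_cons]; simp
        _ = P.Pi (P.wInv gs ++ [P.Pi [P.inv f, g, f]] ++ gs) := ce
        _ = P.Pi (P.wInv gs ++ (P.cnj f g) :: gs) := by
            simp [PartialGroup.cnj]
        _ = gs.foldl (fun y f => P.cnj f y) (P.cnj f g) := ihres.2
        _ = (f :: gs).foldl (fun y f => P.cnj f y) g := rfl

lemma conj_by_Pi (hΔ : ∀ Q ∈ Δ, P.IsSubgroup Q) (hD : P.D = {w | ∃ Q, Dvia P Δ w Q})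
    {w : List L} {Q : Set L} (h : Dvia P Δ w Q) {g : L} (hg : g ∈ NL P Q) :
    P.memD (P.Pi w) g ∧ P.cnj (P.Pi w) g = w.foldl (fun y f => P.cnj f y) g := by
  obtain ⟨hzD, hze⟩ := sandwich P Δ hΔ hD w Q h g hg
  have hwD : w ∈ P.D := by
    have h1 : (P.wInv w ++ [g]) ++ w ∈ P.D := by simpa [List.append_assoc] using hzD
    exact P.append_right_mem h1
  have c1m := P.pg3_mem [] (P.wInv w) (g :: w) (by simpa using hzD)
  have c1e := P.pg3_eq [] (P.wInv w) (g :: w) (by simpa using hzD)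
  rw [P.Pi_wInv hwD] at c1m c1e
  have c2m := P.pg3_mem [P.inv (P.Pi w), g] w [] (by simpa using c1m)
  have c2e := P.pg3_eq [P.inv (P.Pi w), g] w [] (by simpa using c1m)
  constructor
  · unfold PartialGroup.memD
    simpa using c2m
  · unfold PartialGroup.cnj
    calc P.Pi [P.inv (P.Pi w), g, P.Pi w]
        = P.Pi ([P.inv (P.Pi w), g] ++ w ++ []) := by
          have := c2e.symm; simpa using this
      _ = P.Pi ([] ++ [P.inv (P.Pi w)] ++ (g :: w)) := by simp
      _ = P.Pi (P.wInv w ++ g :: w) := by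
          have := c1e.symm; simp only [List.nil_append] at this ⊢
          simpa using this
      _ = w.foldl (fun y f => P.cnj f y) g := hze

lemma foldl_NL {Q : Set L} : ∀ (w : List L), (∀ f ∈ w, f ∈ NL P Q) →
    (∀ x ∈ Q, w.foldl (fun y f => P.cnj f y) x ∈ Q) ∧
    (∀ y ∈ Q, ∃ x ∈ Q, w.foldl (fun y f => P.cnj f y) x = y) := by
  intro w
  induction w with
  | nil => exact fun _ => ⟨fun x hx => hx, fun y hy => ⟨y, hy, rfl⟩⟩
  | cons f gs ih =>
    intro h
    have hf := h f (by simp)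
    have ihr := ih (fun g hg => h g (by simp [hg]))
    constructor
    · intro x hx
      have hfx : P.cnj f x ∈ Q := by rw [← hf.2]; exact ⟨x, hx, rfl⟩
      exact ihr.1 _ hfx
    · intro y hy
      obtain ⟨x', hx', hfold⟩ := ihr.2 y hy
      obtain ⟨x, hx, hcx⟩ : x' ∈ P.cnj f '' Q := by rw [hf.2]; exact hx'
      exact ⟨x, hx, by simp only [List.foldl_cons, hcx, hfold]⟩

end Delta3

theorem stmt18 {L : Type u} (P : PartialGroup L) (Δ : Set (Set L))
    (hΔ : ∀ Q ∈ Δ, P.IsSubgroup Q)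
    (hD : P.D = {w | ∃ Q, Dvia P Δ w Q}) (Q : Set L) (hQ : Q ∈ Δ) :
    P.IsSubgroup (NL P Q) ∧
    (∀ f : L, (∀ x ∈ Q, P.memD f x) → P.cnj f '' Q ∈ Δ →
      (∀ g ∈ NL P Q, P.memD f g) ∧
      Set.BijOn (P.cnj f) (NL P Q) (NL P (P.cnj f '' Q)) ∧
      (∀ g ∈ NL P Q, ∀ g' ∈ NL P Q,
        P.cnj f (P.Pi [g, g']) = P.Pi [P.cnj f g, P.cnj f g'])) ∧
    (∀ w : List L, ∀ R : Set L, Dvia P Δ w R →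
      ∀ g ∈ NL P R, P.cnj (P.Pi w) g = w.foldl (fun y f => P.cnj f y) g) := by
  refine ⟨?_, ?_, ?_⟩
  · -- (a)
    refine ⟨⟨⟨P.one, one_mem_NL P Q⟩, fun g hg => inv_mem_NL P hg, ?_⟩, ?_⟩
    · -- closure under products
      intro w hwD hw
      have hdv : Dvia P Δ w Q := Dvia_const P Δ hQ hw
      have hfold := foldl_NL P w hw
      constructor
      · intro x hx
        exact (conj_by_Pi P Δ hΔ hD hdv (subgroup_sub_NL P (hΔ Q hQ) hx)).1
      · ext y; constructor
        · rintro ⟨x, hx, rfl⟩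
          rw [(conj_by_Pi P Δ hΔ hD hdv (subgroup_sub_NL P (hΔ Q hQ) hx)).2]
          exact hfold.1 x hx
        · intro hy
          obtain ⟨x, hx, hfx⟩ := hfold.2 y hy
          refine ⟨x, hx, ?_⟩
          rw [(conj_by_Pi P Δ hΔ hD hdv (subgroup_sub_NL P (hΔ Q hQ) hx)).2, hfx]
    · -- words in NL are in D
      intro w hw
      exact Dvia_D P Δ hD (Dvia_const P Δ hQ hw)
  · -- (b)
    intro f hf hQ'
    have hstep := inv_step P hf
    have hb1 : ∀ g ∈ NL P Q, P.memD f g := by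
      intro g hg
      refine Dvia_D P Δ hD (Q := P.cnj f '' Q) ?_
      refine Dvia_cons' P Δ hQ' hstep.1 hstep.2 ?_
      refine Dvia_cons' P Δ hQ hg.1 hg.2 ?_
      exact Dvia_cons' P Δ hQ hf rfl hQ'
    refine ⟨hb1, ⟨?_, ?_, ?_⟩, ?_⟩
    · -- MapsTo
      intro g hg
      exact cnj_mem_NL P Δ hΔ hD hQ hQ' hf hg (hb1 g hg)
    · -- InjOn
      intro g hg g' hg' heq
      have h1 := (P.cnj_invert (hb1 g hg)).2
      have h2 := (P.cnj_invert (hb1 g' hg')).2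
      rw [← h1, ← h2, heq]
    · -- SurjOn
      intro h hh
      have hfh : P.memD (P.inv f) h := by
        unfold PartialGroup.memD
        rw [P.inv_inv]
        refine Dvia_D P Δ hD (Q := Q) ?_
        refine Dvia_cons' P Δ hQ hf rfl ?_
        refine Dvia_cons' P Δ hQ' hh.1 hh.2 ?_
        exact Dvia_cons' P Δ hQ' hstep.1 hstep.2 hQ
      have hQ'' : P.cnj (P.inv f) '' (P.cnj f '' Q) ∈ Δ := by rw [hstep.2]; exact hQ
      have hmem := cnj_mem_NL P Δ hΔ hD hQ' hQ'' hstep.1 hh hfh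
      rw [hstep.2] at hmem
      refine ⟨P.cnj (P.inv f) h, hmem, ?_⟩
      have := (P.cnj_invert hfh).2
      rwa [P.inv_inv] at this
    · -- multiplicativity
      intro g hg g' hg'
      have hv2 : Dvia P Δ [P.inv f, g, f, P.inv f, g', f] (P.cnj f '' Q) := by
        refine Dvia_cons' P Δ hQ' hstep.1 hstep.2 ?_
        refine Dvia_cons' P Δ hQ hg.1 hg.2 ?_
        refine Dvia_cons' P Δ hQ hf rfl ?_
        refine Dvia_cons' P Δ hQ' hstep.1 hstep.2 ?_
        refine Dvia_cons' P Δ hQ hg'.1 hg'.2 ?_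
        exact Dvia_cons' P Δ hQ hf rfl hQ'
      have hv2D : [P.inv f, g, f, P.inv f, g', f] ∈ P.D := Dvia_D P Δ hD hv2
      -- way 1 : two triples
      have c1m := P.pg3_mem [] [P.inv f, g, f] [P.inv f, g', f] (by simpa using hv2D)
      have c1e := P.pg3_eq [] [P.inv f, g, f] [P.inv f, g', f] (by simpa using hv2D)
      have c2e := P.pg3_eq [P.Pi [P.inv f, g, f]] [P.inv f, g', f] [] (by simpa using c1m)
      -- way 2 : contract the middle
      have hmidD : [g, f, P.inv f, g'] ∈ P.D := by
        have h1 : ([P.inv f] ++ [g, f, P.inv f, g']) ++ [f] ∈ P.D := by simpa using hv2D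
        exact P.append_right_mem (P.append_left_mem h1)
      have d1e := P.pg3_eq [P.inv f] [g, f, P.inv f, g'] [f] (by simpa using hv2D)
      have hgg' : [g, g'] ∈ P.D := by
        refine Dvia_D P Δ hD (Q := Q) ?_
        refine Dvia_cons' P Δ hQ hg.1 hg.2 ?_
        exact Dvia_cons' P Δ hQ hg'.1 hg'.2 hQ
      have hff : P.Pi [f, P.inv f] = P.one := by
        have := P.Pi_right_inv (P.singleton_mem f)
        simpa [PartialGroup.wInv_singleton] using this
      have e1 := P.pg3_eq [g] [f, P.inv f] [g'] (by simpa using hmidD)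
      have e2 : P.Pi ([g] ++ P.one :: [g']) = P.Pi ([g] ++ [g']) :=
        P.insert_one_eq (by simpa using hgg')
      have emid : P.Pi [g, f, P.inv f, g'] = P.Pi [g, g'] := by
        calc P.Pi [g, f, P.inv f, g']
            = P.Pi ([g] ++ [P.Pi [f, P.inv f]] ++ [g']) := by simpa using e1
          _ = P.Pi ([g] ++ P.one :: [g']) := by rw [hff]; simp
          _ = P.Pi [g, g'] := by simpa using e2
      calc P.cnj f (P.Pi [g, g'])
          = P.Pi [P.inv f, P.Pi [g, f, P.inv f, g'], f] := by
            rw [emid]; rfl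
        _ = P.Pi ([P.inv f] ++ [P.Pi [g, f, P.inv f, g']] ++ [f]) := by simp
        _ = P.Pi [P.inv f, g, f, P.inv f, g', f] := by
            have := d1e.symm; simpa using this
        _ = P.Pi ([P.Pi [P.inv f, g, f]] ++ [P.inv f, g', f]) := by simpa using c1e
        _ = P.Pi ([P.Pi [P.inv f, g, f]] ++ [P.Pi [P.inv f, g', f]] ++ []) := by
            simpa using c2e
        _ = P.Pi [P.cnj f g, P.cnj f g'] := by simp [PartialGroup.cnj]
  · -- (c)
    intro w R hw g hg
    exact (conj_by_Pi P Δ hΔ hD hw hg).2
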